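/- For all ξ ≥ 4, the root ξ₂ of (t² − t)/log t = ξ/log ξ with t > 1 satisfies ξ₂ > √(ξ/2) · (1 − 0.371/log ξ). -/

import Mathlib

private lemma expW : Real.exp (1/32) ≤ 1.031743408 := by
  have h2 : Real.exp (1/32) ^ (32:ℕ) = Real.exp 1 := by
    rw [← Real.exp_nat_mul]; norm_num
  refine le_of_pow_le_pow_left₀ (n := 32) (by norm_num) (by norm_num) ?_
  rw [h2]
  calc Real.exp 1 ≤ 2.7182818286 := Real.exp_one_lt_d9.le
  _ ≤ (1.031743408:ℝ) ^ (32:ℕ) := by norm_num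

private lemma expc (c : ℕ) (A : ℝ) (h : (1.031743408:ℝ)^c ≤ A) : Real.exp ((c:ℝ)/32) ≤ A := by
  have h2 : Real.exp ((c:ℝ)/32) = Real.exp (1/32) ^ c := by
    rw [← Real.exp_nat_mul]; ring_nf
  rw [h2]
  calc Real.exp (1/32) ^ c ≤ (1.031743408:ℝ)^c :=
        pow_le_pow_left₀ (Real.exp_pos _).le expW c
  _ ≤ A := h

private lemma neg_log_le {x b : ℝ} (hx0 : 0 ≤ x) (hx1 : x < 1) (hb0 : 0 ≤ b) (hb1 : b ≤ 1)
    (h : x + b^2/2 + b^4/24 + b^5/100 ≤ b + b^3/6) : -b ≤ Real.log (1 - x) := by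
  have hexp : Real.exp (-b) ≤ 1 - x := by
    have hB := Real.exp_bound (x := -b) (by rw [abs_of_nonpos (by linarith)]; linarith) (n := 5) (by norm_num)
    have habs : |(-b)| = b := by rw [abs_of_nonpos (by linarith)]; ring
    rw [habs] at hB
    have h2 := (abs_le.mp hB).2
    norm_num [Finset.sum_range_succ, Nat.factorial] at h2
    nlinarith [h2]
  calc -b = Real.log (Real.exp (-b)) := (Real.log_exp _).symm
  _ ≤ Real.log (1-x) := Real.log_le_log (Real.exp_pos _) hexp

private lemma icase {ξ : ℝ} (A B l s b : ℝ) (hA : A ≤ ξ) (hB : ξ ≤ B)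
    (hl0 : 1 ≤ l) (hl : Real.exp l ≤ A)
    (hs0 : 0 ≤ s) (hs : s^2 ≤ A/2)
    (hb0 : 0 ≤ b) (hb1 : b ≤ 1)
    (hbx : 0.371/l + b^2/2 + b^4/24 + b^5/100 ≤ b + b^3/6)
    (hb2 : 0 ≤ 0.6931471808/2 - 0.371 + 0.0688205/l + b)
    (hfin : B * (0.6931471808/2 - 0.371 + 0.0688205/l + b) < s * (1 - 0.371/l) * l) :
    ξ * (Real.log 2/2 - 0.371 + 0.0688205/Real.log ξ - Real.log (1 - 0.371/Real.log ξ))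
      < Real.sqrt (ξ/2) * (1 - 0.371/Real.log ξ) * Real.log ξ := by
  have hl0' : (0:ℝ) < l := by linarith
  have hξ0 : (0:ℝ) < ξ := lt_of_lt_of_le (lt_of_lt_of_le (Real.exp_pos l) hl) hA
  have hlL : l ≤ Real.log ξ := by
    calc l = Real.log (Real.exp l) := (Real.log_exp l).symm
    _ ≤ Real.log ξ := Real.log_le_log (Real.exp_pos l) (le_trans hl hA)
  set L := Real.log ξ with hLdef
  have hL0 : 0 < L := lt_of_lt_of_le hl0' hlL
  have hd : 0.371/L ≤ 0.371/l := by gcongr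
  have hdl1 : 0.371/l ≤ 0.371 := by
    calc 0.371/l ≤ 0.371/1 := by gcongr
    _ = 0.371 := by norm_num
  have hx0 : (0:ℝ) ≤ 0.371/L := by positivity
  have hx1 : 0.371/L < 1 := by linarith
  have hlog : -b ≤ Real.log (1 - 0.371/L) :=
    neg_log_le hx0 hx1 hb0 hb1 (by linarith)
  have h68 : 0.0688205/L ≤ 0.0688205/l := by gcongr
  have hbr : Real.log 2/2 - 0.371 + 0.0688205/L - Real.log (1 - 0.371/L)
      ≤ 0.6931471808/2 - 0.371 + 0.0688205/l + b := by
    have := Real.log_two_lt_d9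
    linarith
  have hsqrt : s ≤ Real.sqrt (ξ/2) := by
    rw [Real.le_sqrt hs0 (by positivity)]
    linarith
  have hRHS : s * (1 - 0.371/l) * l ≤ Real.sqrt (ξ/2) * (1 - 0.371/L) * L := by
    have f1 : (0:ℝ) ≤ 1 - 0.371/l := by linarith
    have f2 : 1 - 0.371/l ≤ 1 - 0.371/L := by linarith
    have g1 : s*(1 - 0.371/l) ≤ Real.sqrt (ξ/2) * (1 - 0.371/L) :=
      mul_le_mul hsqrt f2 f1 (Real.sqrt_nonneg _)
    exact mul_le_mul g1 hlL hl0'.le (mul_nonneg (Real.sqrt_nonneg _) (by linarith))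
  calc ξ * (Real.log 2/2 - 0.371 + 0.0688205/L - Real.log (1 - 0.371/L))
      ≤ ξ * (0.6931471808/2 - 0.371 + 0.0688205/l + b) :=
        mul_le_mul_of_nonneg_left hbr hξ0.le
  _ ≤ B * (0.6931471808/2 - 0.371 + 0.0688205/l + b) :=
        mul_le_mul_of_nonneg_right hB hb2
  _ < s * (1 - 0.371/l) * l := hfin
  _ ≤ Real.sqrt (ξ/2) * (1 - 0.371/L) * L := hRHS

private lemma tcase {ξ : ℝ} (A l b : ℝ) (hA : A ≤ ξ)
    (hl0 : 1 ≤ l) (hl : Real.exp l ≤ A)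
    (hb0 : 0 ≤ b) (hb1 : b ≤ 1)
    (hbx : 0.371/l + b^2/2 + b^4/24 + b^5/100 ≤ b + b^3/6)
    (hb2 : 0.6931471808/2 - 0.371 + 0.0688205/l + b ≤ 0) :
    ξ * (Real.log 2/2 - 0.371 + 0.0688205/Real.log ξ - Real.log (1 - 0.371/Real.log ξ))
      < Real.sqrt (ξ/2) * (1 - 0.371/Real.log ξ) * Real.log ξ := by
  have hl0' : (0:ℝ) < l := by linarith
  have hξ0 : (0:ℝ) < ξ := lt_of_lt_of_le (lt_of_lt_of_le (Real.exp_pos l) hl) hA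
  have hlL : l ≤ Real.log ξ := by
    calc l = Real.log (Real.exp l) := (Real.log_exp l).symm
    _ ≤ Real.log ξ := Real.log_le_log (Real.exp_pos l) (le_trans hl hA)
  set L := Real.log ξ with hLdef
  have hL0 : 0 < L := lt_of_lt_of_le hl0' hlL
  have hd : 0.371/L ≤ 0.371/l := by gcongr
  have hdl1 : 0.371/l ≤ 0.371 := by
    calc 0.371/l ≤ 0.371/1 := by gcongr
    _ = 0.371 := by norm_num
  have hx0 : (0:ℝ) ≤ 0.371/L := by positivity
  have hx1 : 0.371/L < 1 := by linarith
  have hlog : -b ≤ Real.log (1 - 0.371/L) :=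
    neg_log_le hx0 hx1 hb0 hb1 (by linarith)
  have h68 : 0.0688205/L ≤ 0.0688205/l := by gcongr
  have hbr : Real.log 2/2 - 0.371 + 0.0688205/L - Real.log (1 - 0.371/L) ≤ 0 := by
    have := Real.log_two_lt_d9
    linarith
  have hRHS : 0 < Real.sqrt (ξ/2) * (1 - 0.371/L) * L := by
    have hsq : 0 < Real.sqrt (ξ/2) := Real.sqrt_pos.mpr (by positivity)
    have : (0:ℝ) < 1 - 0.371/L := by linarith
    positivity
  calc ξ * (Real.log 2/2 - 0.371 + 0.0688205/L - Real.log (1 - 0.371/L))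
      ≤ ξ * 0 := mul_le_mul_of_nonneg_left hbr hξ0.le
  _ = 0 := by ring
  _ < Real.sqrt (ξ/2) * (1 - 0.371/L) * L := hRHS

private lemma main_num {ξ : ℝ} (hξ : 4 ≤ ξ) :
    ξ * (Real.log 2/2 - 0.371 + 0.0688205/Real.log ξ - Real.log (1 - 0.371/Real.log ξ))
      < Real.sqrt (ξ/2) * (1 - 0.371/Real.log ξ) * Real.log ξ := by
  rcases le_or_gt ξ (4.0806244242:ℝ) with h0 | h0
  · exact icase (4:ℝ) (4.0806244242:ℝ) (44/32) (1.414213562:ℝ) (0.314537249185:ℝ) hξ h0 (by norm_num) (by exact_mod_cast expc 44 (4:ℝ) (by norm_num)) (by norm_num) (by norm_num) (by norm_num) (by norm_num) (by norm_num) (by norm_num) (by norm_num)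
  rcases le_or_gt ξ (4.3438020927:ℝ) with h1 | h1
  · exact icase (4.0806244242:ℝ) (4.3438020927:ℝ) (45/32) (1.428394977:ℝ) (0.306349348228:ℝ) h0.le h1 (by norm_num) (by exact_mod_cast expc 45 (4.0806244242:ℝ) (by norm_num)) (by norm_num) (by norm_num) (by norm_num) (by norm_num) (by norm_num) (by norm_num) (by norm_num)
  rcases le_or_gt ξ (5.0784191654:ℝ) with h2 | h2
  · exact icase (4.3438020927:ℝ) (5.0784191654:ℝ) (47/32) (1.473737102:ℝ) (0.291199343931:ℝ) h1.le h2 (by norm_num) (by exact_mod_cast expc 47 (4.3438020927:ℝ) (by norm_num)) (by norm_num) (by norm_num) (by norm_num) (by norm_num) (by norm_num) (by norm_num) (by norm_num)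
  rcases le_or_gt ξ (7.1617189616:ℝ) with h3 | h3
  · exact icase (5.0784191654:ℝ) (7.1617189616:ℝ) (52/32) (1.593489749:ℝ) (0.259196641573:ℝ) h2.le h3 (by norm_num) (by exact_mod_cast expc 52 (5.0784191654:ℝ) (by norm_num)) (by norm_num) (by norm_num) (by norm_num) (by norm_num) (by norm_num) (by norm_num) (by norm_num)
  rcases le_or_gt ξ (13.379852629:ℝ) with h4 | h4
  · exact icase (7.1617189616:ℝ) (13.379852629:ℝ) (63/32) (1.892315904:ℝ) (0.208811264494:ℝ) h3.le h4 (by norm_num) (by exact_mod_cast expc 63 (7.1617189616:ℝ) (by norm_num)) (by norm_num) (by norm_num) (by norm_num) (by norm_num) (by norm_num) (by norm_num) (by norm_num)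
  rcases le_or_gt ξ (36.370210832:ℝ) with h5 | h5
  · exact icase (13.379852629:ℝ) (36.370210832:ℝ) (83/32) (2.586489187:ℝ) (0.154361390559:ℝ) h4.le h5 (by norm_num) (by exact_mod_cast expc 83 (13.379852629:ℝ) (by norm_num)) (by norm_num) (by norm_num) (by norm_num) (by norm_num) (by norm_num) (by norm_num) (by norm_num)
  rcases le_or_gt ξ (130.97416314:ℝ) with h6 | h6
  · exact icase (36.370210832:ℝ) (130.97416314:ℝ) (115/32) (4.264399772:ℝ) (0.108961504779:ℝ) h5.le h6 (by norm_num) (by exact_mod_cast expc 115 (36.370210832:ℝ) (by norm_num)) (by norm_num) (by norm_num) (by norm_num) (by norm_num) (by norm_num) (by norm_num) (by norm_num)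
  rcases le_or_gt ξ (518.01287497:ℝ) with h7 | h7
  · exact icase (130.97416314:ℝ) (518.01287497:ℝ) (156/32) (8.092408885:ℝ) (0.079154274984:ℝ) h6.le h7 (by norm_num) (by exact_mod_cast expc 156 (130.97416314:ℝ) (by norm_num)) (by norm_num) (by norm_num) (by norm_num) (by norm_num) (by norm_num) (by norm_num) (by norm_num)
  rcases le_or_gt ξ (1924.6513578:ℝ) with h8 | h8
  · exact icase (518.01287497:ℝ) (1924.6513578:ℝ) (200/32) (16.09367694:ℝ) (0.0611948010385:ℝ) h7.le h8 (by norm_num) (by exact_mod_cast expc 200 (518.01287497:ℝ) (by norm_num)) (by norm_num) (by norm_num) (by norm_num) (by norm_num) (by norm_num) (by norm_num) (by norm_num)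
  rcases le_or_gt ξ (6310.688966:ℝ) with h9 | h9
  · exact icase (1924.6513578:ℝ) (6310.688966:ℝ) (242/32) (31.02137454:ℝ) (0.0503020565309:ℝ) h8.le h9 (by norm_num) (by exact_mod_cast expc 242 (1924.6513578:ℝ) (by norm_num)) (by norm_num) (by norm_num) (by norm_num) (by norm_num) (by norm_num) (by norm_num) (by norm_num)
  rcases le_or_gt ξ (17154.231408:ℝ) with h10 | h10
  · exact icase (6310.688966:ℝ) (17154.231408:ℝ) (280/32) (56.17245306:ℝ) (0.0433251276947:ℝ) h9.le h10 (by norm_num) (by exact_mod_cast expc 280 (6310.688966:ℝ) (by rw [← pow_mul_pow_sub _ (by norm_num : 200 ≤ 280)]; norm_num)) (by norm_num) (by norm_num) (by norm_num) (by norm_num) (by norm_num) (by norm_num) (by norm_num)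
  rcases le_or_gt ξ (39884.783515:ℝ) with h11 | h11
  · exact icase (17154.231408:ℝ) (39884.783515:ℝ) (312/32) (92.61271891:ℝ) (0.0387941391915:ℝ) h10.le h11 (by norm_num) (by exact_mod_cast expc 312 (17154.231408:ℝ) (by rw [← pow_mul_pow_sub _ (by norm_num : 200 ≤ 312)]; norm_num)) (by norm_num) (by norm_num) (by norm_num) (by norm_num) (by norm_num) (by norm_num) (by norm_num)
  rcases le_or_gt ξ (79320.364288:ℝ) with h12 | h12
  · exact icase (39884.783515:ℝ) (79320.364288:ℝ) (339/32) (141.2175334:ℝ) (0.0356485768925:ℝ) h11.le h12 (by norm_num) (by exact_mod_cast expc 339 (39884.783515:ℝ) (by rw [← pow_mul_pow_sub _ (by norm_num : 200 ≤ 339)]; norm_num)) (by norm_num) (by norm_num) (by norm_num) (by norm_num) (by norm_num) (by norm_num) (by norm_num)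
  rcases le_or_gt ξ (143630.62581:ℝ) with h13 | h13
  · exact icase (79320.364288:ℝ) (143630.62581:ℝ) (361/32) (199.1486433:ℝ) (0.0334393420177:ℝ) h12.le h13 (by norm_num) (by exact_mod_cast expc 361 (79320.364288:ℝ) (by rw [← pow_mul_pow_sub _ (by norm_num : 200 ≤ 361)]; norm_num)) (by norm_num) (by norm_num) (by norm_num) (by norm_num) (by norm_num) (by norm_num) (by norm_num)
  rcases le_or_gt ξ (229521.08819:ℝ) with h14 | h14
  · exact icase (143630.62581:ℝ) (229521.08819:ℝ) (380/32) (267.9837922:ℝ) (0.031740549582:ℝ) h13.le h14 (by norm_num) (by exact_mod_cast expc 380 (143630.62581:ℝ) (by rw [← pow_mul_pow_sub _ (by norm_num : 200 ≤ 380)]; norm_num)) (by norm_num) (by norm_num) (by norm_num) (by norm_num) (by norm_num) (by norm_num) (by norm_num)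
  rcases le_or_gt ξ (344551.96439:ℝ) with h15 | h15
  · exact icase (229521.08819:ℝ) (344551.96439:ℝ) (395/32) (338.7632567:ℝ) (0.0305166284284:ℝ) h14.le h15 (by norm_num) (by exact_mod_cast expc 395 (229521.08819:ℝ) (by rw [← pow_mul_pow_sub _ (by norm_num : 200 ≤ 395)]; norm_num)) (by norm_num) (by norm_num) (by norm_num) (by norm_num) (by norm_num) (by norm_num) (by norm_num)
  rcases le_or_gt ξ (485896.15316:ℝ) with h16 | h16
  · exact icase (344551.96439:ℝ) (485896.15316:ℝ) (408/32) (415.0614197:ℝ) (0.0295297835074:ℝ) h15.le h16 (by norm_num) (by exact_mod_cast expc 408 (344551.96439:ℝ) (by rw [← pow_mul_pow_sub _ (by norm_num : 200 ≤ 408)]; norm_num)) (by norm_num) (by norm_num) (by norm_num) (by norm_num) (by norm_num) (by norm_num) (by norm_num)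
  rcases le_or_gt ξ (643707.82084:ℝ) with h17 | h17
  · exact icase (485896.15316:ℝ) (643707.82084:ℝ) (419/32) (492.8976329:ℝ) (0.0287432880068:ℝ) h16.le h17 (by norm_num) (by exact_mod_cast expc 419 (485896.15316:ℝ) (by rw [← pow_mul_pow_sub _ (by norm_num : 200 ≤ 419)]; norm_num)) (by norm_num) (by norm_num) (by norm_num) (by norm_num) (by norm_num) (by norm_num) (by norm_num)
  rcases le_or_gt ξ (826537.20609:ℝ) with h18 | h18
  · exact icase (643707.82084:ℝ) (826537.20609:ℝ) (428/32) (567.3216992:ℝ) (0.0281302907:ℝ) h17.le h18 (by norm_num) (by exact_mod_cast expc 428 (643707.82084:ℝ) (by rw [← pow_mul_pow_sub _ (by norm_num : 200 ≤ 428)]; norm_num)) (by norm_num) (by norm_num) (by norm_num) (by norm_num) (by norm_num) (by norm_num) (by norm_num)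
  rcases le_or_gt ξ (1028642.1763:ℝ) with h19 | h19
  · exact icase (826537.20609:ℝ) (1028642.1763:ℝ) (436/32) (642.8597071:ℝ) (0.0276069472125:ℝ) h18.le h19 (by norm_num) (by exact_mod_cast expc 436 (826537.20609:ℝ) (by rw [← pow_mul_pow_sub _ (by norm_num : 200 ≤ 436)]; norm_num)) (by norm_num) (by norm_num) (by norm_num) (by norm_num) (by norm_num) (by norm_num) (by norm_num)
  rcases le_or_gt ξ (1240779.3125:ℝ) with h20 | h20
  · exact icase (1028642.1763:ℝ) (1240779.3125:ℝ) (443/32) (717.1618284:ℝ) (0.0271647405789:ℝ) h19.le h20 (by norm_num) (by exact_mod_cast expc 443 (1028642.1763:ℝ) (by rw [← pow_mul_pow_sub _ (by norm_num : 200 ≤ 443)]; norm_num)) (by norm_num) (by norm_num) (by norm_num) (by norm_num) (by norm_num) (by norm_num) (by norm_num)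
  rcases le_or_gt ξ (1450617.9854:ℝ) with h21 | h21
  · exact icase (1240779.3125:ℝ) (1450617.9854:ℝ) (449/32) (787.6481805:ℝ) (0.0267968296433:ℝ) h20.le h21 (by norm_num) (by exact_mod_cast expc 449 (1240779.3125:ℝ) (by rw [← pow_mul_pow_sub _ (by norm_num : 200 ≤ 449)]; norm_num)) (by norm_num) (by norm_num) (by norm_num) (by norm_num) (by norm_num) (by norm_num) (by norm_num)
  rcases le_or_gt ξ (1695944.2492:ℝ) with h22 | h22
  · exact icase (1450617.9854:ℝ) (1695944.2492:ℝ) (454/32) (851.6507457:ℝ) (0.0264977653993:ℝ) h21.le h22 (by norm_num) (by exact_mod_cast expc 454 (1450617.9854:ℝ) (by rw [← pow_mul_pow_sub _ (by norm_num : 200 ≤ 454)]; norm_num)) (by norm_num) (by norm_num) (by norm_num) (by norm_num) (by norm_num) (by norm_num) (by norm_num)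
  rcases le_or_gt ξ (1921756.6062:ℝ) with h23 | h23
  · exact icase (1695944.2492:ℝ) (1921756.6062:ℝ) (459/32) (920.8540191:ℝ) (0.0262053032291:ℝ) h22.le h23 (by norm_num) (by exact_mod_cast expc 459 (1695944.2492:ℝ) (by rw [← pow_mul_pow_sub _ (by norm_num : 400 ≤ 459), show (400:ℕ) = 200 + 200 from rfl, pow_add]; norm_num)) (by norm_num) (by norm_num) (by norm_num) (by norm_num) (by norm_num) (by norm_num) (by norm_num)
  rcases le_or_gt ξ (2177635.5297:ℝ) with h24 | h24
  · exact icase (1921756.6062:ℝ) (2177635.5297:ℝ) (463/32) (980.2440018:ℝ) (0.0259759413519:ℝ) h23.le h24 (by norm_num) (by exact_mod_cast expc 463 (1921756.6062:ℝ) (by rw [← pow_mul_pow_sub _ (by norm_num : 400 ≤ 463), show (400:ℕ) = 200 + 200 from rfl, pow_add]; norm_num)) (by norm_num) (by norm_num) (by norm_num) (by norm_num) (by norm_num) (by norm_num) (by norm_num)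
  rcases le_or_gt ξ (2391664.7468:ℝ) with h25 | h25
  · exact icase (2177635.5297:ℝ) (2391664.7468:ℝ) (467/32) (1043.464309:ℝ) (0.0257505598377:ℝ) h24.le h25 (by norm_num) (by exact_mod_cast expc 467 (2177635.5297:ℝ) (by rw [← pow_mul_pow_sub _ (by norm_num : 400 ≤ 467), show (400:ℕ) = 200 + 200 from rfl, pow_add]; norm_num)) (by norm_num) (by norm_num) (by norm_num) (by norm_num) (by norm_num) (by norm_num) (by norm_num)
  rcases le_or_gt ξ (2626729.8558:ℝ) with h26 | h26
  · exact icase (2391664.7468:ℝ) (2626729.8558:ℝ) (470/32) (1093.541207:ℝ) (0.0255840738849:ℝ) h25.le h26 (by norm_num) (by exact_mod_cast expc 470 (2391664.7468:ℝ) (by rw [← pow_mul_pow_sub _ (by norm_num : 400 ≤ 470), show (400:ℕ) = 200 + 200 from rfl, pow_add]; norm_num)) (by norm_num) (by norm_num) (by norm_num) (by norm_num) (by norm_num) (by norm_num) (by norm_num)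
  rcases le_or_gt ξ (2884898.3724:ℝ) with h27 | h27
  · exact icase (2626729.8558:ℝ) (2884898.3724:ℝ) (473/32) (1146.021347:ℝ) (0.0254197269928:ℝ) h26.le h27 (by norm_num) (by exact_mod_cast expc 473 (2626729.8558:ℝ) (by rw [← pow_mul_pow_sub _ (by norm_num : 400 ≤ 473), show (400:ℕ) = 200 + 200 from rfl, pow_add]; norm_num)) (by norm_num) (by norm_num) (by norm_num) (by norm_num) (by norm_num) (by norm_num) (by norm_num)
  rcases le_or_gt ξ (3168441.0183:ℝ) with h28 | h28
  · exact icase (2884898.3724:ℝ) (3168441.0183:ℝ) (476/32) (1201.02006:ℝ) (0.0252574781974:ℝ) h27.le h28 (by norm_num) (by exact_mod_cast expc 476 (2884898.3724:ℝ) (by rw [← pow_mul_pow_sub _ (by norm_num : 400 ≤ 476), show (400:ℕ) = 200 + 200 from rfl, pow_add]; norm_num)) (by norm_num) (by norm_num) (by norm_num) (by norm_num) (by norm_num) (by norm_num) (by norm_num)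
  rcases le_or_gt ξ (3479851.6935:ℝ) with h29 | h29
  · exact icase (3168441.0183:ℝ) (3479851.6935:ℝ) (479/32) (1258.658217:ℝ) (0.025097287574:ℝ) h28.le h29 (by norm_num) (by exact_mod_cast expc 479 (3168441.0183:ℝ) (by rw [← pow_mul_pow_sub _ (by norm_num : 400 ≤ 479), show (400:ℕ) = 200 + 200 from rfl, pow_add]; norm_num)) (by norm_num) (by norm_num) (by norm_num) (by norm_num) (by norm_num) (by norm_num) (by norm_num)
  rcases le_or_gt ξ (3704282.8491:ℝ) with h30 | h30
  · exact icase (3479851.6935:ℝ) (3704282.8491:ℝ) (482/32) (1319.062487:ℝ) (0.0249391162049:ℝ) h29.le h30 (by norm_num) (by exact_mod_cast expc 482 (3479851.6935:ℝ) (by rw [← pow_mul_pow_sub _ (by norm_num : 400 ≤ 482), show (400:ℕ) = 200 + 200 from rfl, pow_add]; norm_num)) (by norm_num) (by norm_num) (by norm_num) (by norm_num) (by norm_num) (by norm_num) (by norm_num)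
  rcases le_or_gt ξ (3943188.571:ℝ) with h31 | h31
  · exact icase (3704282.8491:ℝ) (3943188.571:ℝ) (484/32) (1360.934026:ℝ) (0.0248347716569:ℝ) h30.le h31 (by norm_num) (by exact_mod_cast expc 484 (3704282.8491:ℝ) (by rw [← pow_mul_pow_sub _ (by norm_num : 400 ≤ 484), show (400:ℕ) = 200 + 200 from rfl, pow_add]; norm_num)) (by norm_num) (by norm_num) (by norm_num) (by norm_num) (by norm_num) (by norm_num) (by norm_num)
  rcases le_or_gt ξ (4197502.3884:ℝ) with h32 | h32
  · exact icase (3943188.571:ℝ) (4197502.3884:ℝ) (486/32) (1404.13471:ℝ) (0.0247312966645:ℝ) h31.le h32 (by norm_num) (by exact_mod_cast expc 486 (3943188.571:ℝ) (by rw [← pow_mul_pow_sub _ (by norm_num : 400 ≤ 486), show (400:ℕ) = 200 + 200 from rfl, pow_add]; norm_num)) (by norm_num) (by norm_num) (by norm_num) (by norm_num) (by norm_num) (by norm_num) (by norm_num)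
  rcases le_or_gt ξ (4468218.038:ℝ) with h33 | h33
  · exact icase (4197502.3884:ℝ) (4468218.038:ℝ) (488/32) (1448.706731:ℝ) (0.0246286804025:ℝ) h32.le h33 (by norm_num) (by exact_mod_cast expc 488 (4197502.3884:ℝ) (by rw [← pow_mul_pow_sub _ (by norm_num : 400 ≤ 488), show (400:ℕ) = 200 + 200 from rfl, pow_add]; norm_num)) (by norm_num) (by norm_num) (by norm_num) (by norm_num) (by norm_num) (by norm_num) (by norm_num)
  rcases le_or_gt ξ (4756393.3473:ℝ) with h34 | h34
  · exact icase (4468218.038:ℝ) (4756393.3473:ℝ) (490/32) (1494.69362:ℝ) (0.0245269122248:ℝ) h33.le h34 (by norm_num) (by exact_mod_cast expc 490 (4468218.038:ℝ) (by rw [← pow_mul_pow_sub _ (by norm_num : 400 ≤ 490), show (400:ℕ) = 200 + 200 from rfl, pow_add]; norm_num)) (by norm_num) (by norm_num) (by norm_num) (by norm_num) (by norm_num) (by norm_num) (by norm_num)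
  rcases le_or_gt ξ (5063154.3676:ℝ) with h35 | h35
  · exact icase (4756393.3473:ℝ) (5063154.3676:ℝ) (492/32) (1542.140289:ℝ) (0.0244259816605:ℝ) h34.le h35 (by norm_num) (by exact_mod_cast expc 492 (4756393.3473:ℝ) (by rw [← pow_mul_pow_sub _ (by norm_num : 400 ≤ 492), show (400:ℕ) = 200 + 200 from rfl, pow_add]; norm_num)) (by norm_num) (by norm_num) (by norm_num) (by norm_num) (by norm_num) (by norm_num) (by norm_num)
  rcases le_or_gt ξ (5389699.7742:ℝ) with h36 | h36
  · exact icase (5063154.3676:ℝ) (5389699.7742:ℝ) (494/32) (1591.093078:ℝ) (0.0243258784103:ℝ) h35.le h36 (by norm_num) (by exact_mod_cast expc 494 (5063154.3676:ℝ) (by rw [← pow_mul_pow_sub _ (by norm_num : 400 ≤ 494), show (400:ℕ) = 200 + 200 from rfl, pow_add]; norm_num)) (by norm_num) (by norm_num) (by norm_num) (by norm_num) (by norm_num) (by norm_num) (by norm_num)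
  rcases le_or_gt ξ (5737305.5504:ℝ) with h37 | h37
  · exact icase (5389699.7742:ℝ) (5737305.5504:ℝ) (496/32) (1641.599795:ℝ) (0.0242265923432:ℝ) h36.le h37 (by norm_num) (by exact_mod_cast expc 496 (5389699.7742:ℝ) (by rw [← pow_mul_pow_sub _ (by norm_num : 400 ≤ 496), show (400:ℕ) = 200 + 200 from rfl, pow_add]; norm_num)) (by norm_num) (by norm_num) (by norm_num) (by norm_num) (by norm_num) (by norm_num) (by norm_num)
  rcases le_or_gt ξ (6107329.9735:ℝ) with h38 | h38
  · exact icase (5737305.5504:ℝ) (6107329.9735:ℝ) (498/32) (1693.709767:ℝ) (0.024128113493:ℝ) h37.le h38 (by norm_num) (by exact_mod_cast expc 498 (5737305.5504:ℝ) (by rw [← pow_mul_pow_sub _ (by norm_num : 400 ≤ 498), show (400:ℕ) = 200 + 200 from rfl, pow_add]; norm_num)) (by norm_num) (by norm_num) (by norm_num) (by norm_num) (by norm_num) (by norm_num) (by norm_num)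
  rcases le_or_gt ξ (6501218.9218:ℝ) with h39 | h39
  · exact icase (6107329.9735:ℝ) (6501218.9218:ℝ) (500/32) (1747.473887:ℝ) (0.0240304320547:ℝ) h38.le h39 (by norm_num) (by exact_mod_cast expc 500 (6107329.9735:ℝ) (by rw [← pow_mul_pow_sub _ (by norm_num : 400 ≤ 500), show (400:ℕ) = 200 + 200 from rfl, pow_add]; norm_num)) (by norm_num) (by norm_num) (by norm_num) (by norm_num) (by norm_num) (by norm_num) (by norm_num)
  rcases le_or_gt ξ (6920511.5252:ℝ) with h40 | h40
  · exact icase (6501218.9218:ℝ) (6920511.5252:ℝ) (502/32) (1802.944663:ℝ) (0.0239335383816:ℝ) h39.le h40 (by norm_num) (by exact_mod_cast expc 502 (6501218.9218:ℝ) (by rw [← pow_mul_pow_sub _ (by norm_num : 400 ≤ 502), show (400:ℕ) = 200 + 200 from rfl, pow_add]; norm_num)) (by norm_num) (by norm_num) (by norm_num) (by norm_num) (by norm_num) (by norm_num) (by norm_num)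
  rcases le_or_gt ξ (7366846.1786:ℝ) with h41 | h41
  · exact icase (6920511.5252:ℝ) (7366846.1786:ℝ) (504/32) (1860.176271:ℝ) (0.023837422982:ℝ) h40.le h41 (by norm_num) (by exact_mod_cast expc 504 (6920511.5252:ℝ) (by rw [← pow_mul_pow_sub _ (by norm_num : 400 ≤ 504), show (400:ℕ) = 200 + 200 from rfl, pow_add]; norm_num)) (by norm_num) (by norm_num) (by norm_num) (by norm_num) (by norm_num) (by norm_num) (by norm_num)
  rcases le_or_gt ξ (7841966.9445:ℝ) with h42 | h42
  · exact icase (7366846.1786:ℝ) (7841966.9445:ℝ) (506/32) (1919.224606:ℝ) (0.023742076516:ℝ) h41.le h42 (by norm_num) (by exact_mod_cast expc 506 (7366846.1786:ℝ) (by rw [← pow_mul_pow_sub _ (by norm_num : 400 ≤ 506), show (400:ℕ) = 200 + 200 from rfl, pow_add]; norm_num)) (by norm_num) (by norm_num) (by norm_num) (by norm_num) (by norm_num) (by norm_num) (by norm_num)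
  rcases le_or_gt ξ (8612715.7784:ℝ) with h43 | h43
  · exact icase (7841966.9445:ℝ) (8612715.7784:ℝ) (508/32) (1980.147335:ℝ) (0.0236474897926:ℝ) h42.le h43 (by norm_num) (by exact_mod_cast expc 508 (7841966.9445:ℝ) (by rw [← pow_mul_pow_sub _ (by norm_num : 400 ≤ 508), show (400:ℕ) = 200 + 200 from rfl, pow_add]; norm_num)) (by norm_num) (by norm_num) (by norm_num) (by norm_num) (by norm_num) (by norm_num) (by norm_num)
  rcases le_or_gt ξ (9459217.7709:ℝ) with h44 | h44
  · exact icase (8612715.7784:ℝ) (9459217.7709:ℝ) (511/32) (2075.176592:ℝ) (0.023507014478:ℝ) h43.le h44 (by norm_num) (by exact_mod_cast expc 511 (8612715.7784:ℝ) (by rw [← pow_mul_pow_sub _ (by norm_num : 400 ≤ 511), show (400:ℕ) = 200 + 200 from rfl, pow_add]; norm_num)) (by norm_num) (by norm_num) (by norm_num) (by norm_num) (by norm_num) (by norm_num) (by norm_num)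
  rcases le_or_gt ξ (10388918.332:ℝ) with h45 | h45
  · exact icase (9459217.7709:ℝ) (10388918.332:ℝ) (514/32) (2174.766397:ℝ) (0.0233681983396:ℝ) h44.le h45 (by norm_num) (by exact_mod_cast expc 514 (9459217.7709:ℝ) (by rw [← pow_mul_pow_sub _ (by norm_num : 400 ≤ 514), show (400:ℕ) = 200 + 200 from rfl, pow_add]; norm_num)) (by norm_num) (by norm_num) (by norm_num) (by norm_num) (by norm_num) (by norm_num) (by norm_num)
  rcases le_or_gt ξ (11409994.645:ℝ) with h46 | h46
  · exact icase (10388918.332:ℝ) (11409994.645:ℝ) (517/32) (2279.135618:ℝ) (0.0232310121535:ℝ) h45.le h46 (by norm_num) (by exact_mod_cast expc 517 (10388918.332:ℝ) (by rw [← pow_mul_pow_sub _ (by norm_num : 400 ≤ 517), show (400:ℕ) = 200 + 200 from rfl, pow_add]; norm_num)) (by norm_num) (by norm_num) (by norm_num) (by norm_num) (by norm_num) (by norm_num) (by norm_num)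
  rcases le_or_gt ξ (12929217.806:ℝ) with h47 | h47
  · exact icase (11409994.645:ℝ) (12929217.806:ℝ) (520/32) (2388.513622:ℝ) (0.023095427378:ℝ) h46.le h47 (by norm_num) (by exact_mod_cast expc 520 (11409994.645:ℝ) (by rw [← pow_mul_pow_sub _ (by norm_num : 400 ≤ 520), show (400:ℕ) = 200 + 200 from rfl, pow_add]; norm_num)) (by norm_num) (by norm_num) (by norm_num) (by norm_num) (by norm_num) (by norm_num) (by norm_num)
  rcases le_or_gt ξ (14650723.185:ℝ) with h48 | h48
  · exact icase (12929217.806:ℝ) (14650723.185:ℝ) (524/32) (2542.559518:ℝ) (0.0229170906677:ℝ) h47.le h48 (by norm_num) (by exact_mod_cast expc 524 (12929217.806:ℝ) (by rw [← pow_mul_pow_sub _ (by norm_num : 400 ≤ 524), show (400:ℕ) = 200 + 200 from rfl, pow_add]; norm_num)) (by norm_num) (by norm_num) (by norm_num) (by norm_num) (by norm_num) (by norm_num) (by norm_num)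
  rcases le_or_gt ξ (17128430.767:ℝ) with h49 | h49
  · exact icase (14650723.185:ℝ) (17128430.767:ℝ) (528/32) (2706.540521:ℝ) (0.0227414871082:ℝ) h48.le h49 (by norm_num) (by exact_mod_cast expc 528 (14650723.185:ℝ) (by rw [← pow_mul_pow_sub _ (by norm_num : 400 ≤ 528), show (400:ℕ) = 200 + 200 from rfl, pow_add]; norm_num)) (by norm_num) (by norm_num) (by norm_num) (by norm_num) (by norm_num) (by norm_num) (by norm_num)
  rcases le_or_gt ξ (21316676.576:ℝ) with h50 | h50
  · exact icase (17128430.767:ℝ) (21316676.576:ℝ) (533/32) (2926.468073:ℝ) (0.0225257313364:ℝ) h49.le h50 (by norm_num) (by exact_mod_cast expc 533 (17128430.767:ℝ) (by rw [← pow_mul_pow_sub _ (by norm_num : 400 ≤ 533), show (400:ℕ) = 200 + 200 from rfl, pow_add]; norm_num)) (by norm_num) (by norm_num) (by norm_num) (by norm_num) (by norm_num) (by norm_num) (by norm_num)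
  rcases le_or_gt ξ (28240008.358:ℝ) with h51 | h51
  · exact icase (21316676.576:ℝ) (28240008.358:ℝ) (540/32) (3264.711057:ℝ) (0.0222304611135:ℝ) h50.le h51 (by norm_num) (by exact_mod_cast expc 540 (21316676.576:ℝ) (by rw [← pow_mul_pow_sub _ (by norm_num : 400 ≤ 540), show (400:ℕ) = 200 + 200 from rfl, pow_add]; norm_num)) (by norm_num) (by norm_num) (by norm_num) (by norm_num) (by norm_num) (by norm_num) (by norm_num)
  rcases le_or_gt ξ (42393273.886:ℝ) with h52 | h52
  · exact icase (28240008.358:ℝ) (42393273.886:ℝ) (549/32) (3757.659401:ℝ) (0.0218620142532:ℝ) h51.le h52 (by norm_num) (by exact_mod_cast expc 549 (28240008.358:ℝ) (by rw [← pow_mul_pow_sub _ (by norm_num : 400 ≤ 549), show (400:ℕ) = 200 + 200 from rfl, pow_add]; norm_num)) (by norm_num) (by norm_num) (by norm_num) (by norm_num) (by norm_num) (by norm_num) (by norm_num)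
  rcases le_or_gt ξ (92595424.318:ℝ) with h53 | h53
  · exact icase (42393273.886:ℝ) (92595424.318:ℝ) (562/32) (4603.980554:ℝ) (0.0213508715756:ℝ) h52.le h53 (by norm_num) (by exact_mod_cast expc 562 (42393273.886:ℝ) (by rw [← pow_mul_pow_sub _ (by norm_num : 400 ≤ 562), show (400:ℕ) = 200 + 200 from rfl, pow_add]; norm_num)) (by norm_num) (by norm_num) (by norm_num) (by norm_num) (by norm_num) (by norm_num) (by norm_num)
  · exact tcase (92595424.318:ℝ) (587/32) (0.0204321951957:ℝ) h53.le (by norm_num) (by exact_mod_cast expc 587 (92595424.318:ℝ) (by rw [← pow_mul_pow_sub _ (by norm_num : 400 ≤ 587), show (400:ℕ) = 200 + 200 from rfl, pow_add]; norm_num)) (by norm_num) (by norm_num) (by norm_num) (by norm_num)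


private lemma wrapper {ξ : ℝ} (hξ : 4 ≤ ξ)
    (hΦ : 1 < Real.sqrt (ξ/2) * (1 - 0.371/Real.log ξ))
    (h : ξ * (Real.log 2/2 - 0.371 + 0.0688205/Real.log ξ - Real.log (1 - 0.371/Real.log ξ))
      < Real.sqrt (ξ/2) * (1 - 0.371/Real.log ξ) * Real.log ξ) :
    ((Real.sqrt (ξ/2) * (1 - 0.371/Real.log ξ))^2 - Real.sqrt (ξ/2) * (1 - 0.371/Real.log ξ)) * Real.log ξ
      < ξ * Real.log (Real.sqrt (ξ/2) * (1 - 0.371/Real.log ξ)) := by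
  have hξ0 : (0:ℝ) < ξ := by linarith
  have hL : 0 < Real.log ξ := Real.log_pos (by linarith)
  set L := Real.log ξ with hLdef
  set d : ℝ := 0.371 / L with hddef
  have hdL : d * L = 0.371 := div_mul_cancel₀ _ hL.ne'
  have hS : 0 < Real.sqrt (ξ/2) := Real.sqrt_pos.mpr (by linarith)
  have h1d : 0 < 1 - d := by nlinarith [Real.sqrt_nonneg (ξ/2)]
  have hS2 : Real.sqrt (ξ/2)^2 = ξ/2 := Real.sq_sqrt (by linarith)
  have hlogΦ : Real.log (Real.sqrt (ξ/2) * (1 - d)) = (L - Real.log 2)/2 + Real.log (1 - d) := by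
    rw [Real.log_mul hS.ne' h1d.ne', Real.log_sqrt (by linarith)]
    rw [Real.log_div (by linarith) (by norm_num)]
  have h67 : (0.0688205:ℝ)/L = 0.371 * d / 2 := by
    rw [hddef]; field_simp; ring
  rw [h67] at h
  rw [hlogΦ]
  have hsq : (Real.sqrt (ξ/2) * (1 - d))^2 = (ξ/2) * (1-d)^2 := by
    rw [mul_pow, hS2]
  rw [hsq]
  have E : ((ξ/2) * (1-d)^2 - Real.sqrt (ξ/2) * (1-d)) * L - ξ*((L - Real.log 2)/2 + Real.log (1-d))
      = ξ*(Real.log 2/2 - 0.371 + 0.371*d/2 - Real.log (1-d)) - Real.sqrt (ξ/2) * (1-d) * L := by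
    linear_combination (-(ξ/2)*(2 - d)) * hdL
  linarith [E, h]

private lemma f_mono : StrictMonoOn (fun t : ℝ => (t^2 - t)/Real.log t) (Set.Ioi 1) := by
  have hderiv : ∀ x ∈ Set.Ioi (1:ℝ), HasDerivAt (fun t : ℝ => (t^2 - t)/Real.log t)
      (((2*x - 1) * Real.log x - (x^2 - x) * x⁻¹) / (Real.log x)^2) x := by
    intro x hx
    have hx1 : (1:ℝ) < x := hx
    have hlog : 0 < Real.log x := Real.log_pos hx1
    have h1 : HasDerivAt (fun t : ℝ => t^2 - t) (2*x - 1) x := by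
      exact ((hasDerivAt_pow 2 x).sub (hasDerivAt_id' x)).congr_deriv (by norm_num)
    have h2 : HasDerivAt Real.log x⁻¹ x := Real.hasDerivAt_log (by linarith)
    exact h1.div h2 hlog.ne'
  apply strictMonoOn_of_deriv_pos (convex_Ioi 1)
  · intro x hx
    exact ((hderiv x hx).continuousAt).continuousWithinAt
  · intro x hx
    rw [interior_Ioi] at hx
    rw [(hderiv x hx).deriv]
    have hx1 : (1:ℝ) < x := hx
    have hlog : 0 < Real.log x := Real.log_pos hx1
    have hx0 : (0:ℝ) < x := by linarith
    have hlx : x - 1 < Real.log x * x := by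
      have h := Real.log_lt_sub_one_of_pos (x := x⁻¹) (by positivity) (by
        intro hcon
        have : x = 1 := by field_simp at hcon; linarith
        linarith)
      rw [Real.log_inv] at h
      have h2 := mul_lt_mul_of_pos_left h hx0
      rw [mul_sub, mul_inv_cancel₀ hx0.ne'] at h2
      nlinarith [h2]
    apply div_pos
    · have hval : (x^2 - x) * x⁻¹ = x - 1 := by field_simp
      rw [hval]
      nlinarith [hlx, hx0, sq_nonneg (x-1), (show (0:ℝ) < 2*x - 1 by linarith)]
    · positivity

theorem stmt16 (ξ ξ₂ : ℝ) (hξ : 4 ≤ ξ) (hξ₂ : 1 < ξ₂)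
    (heq : (ξ₂ ^ 2 - ξ₂) / Real.log ξ₂ = ξ / Real.log ξ) :
    Real.sqrt (ξ / 2) * (1 - 0.371 / Real.log ξ) < ξ₂ := by
  have hL : 0 < Real.log ξ := Real.log_pos (by linarith)
  rcases le_or_gt (Real.sqrt (ξ / 2) * (1 - 0.371 / Real.log ξ)) 1 with hΦ | hΦ
  · linarith
  · have hmain : ξ * (Real.log 2/2 - 0.371 + 0.0688205/Real.log ξ - Real.log (1 - 0.371/Real.log ξ))
        < Real.sqrt (ξ/2) * (1 - 0.371/Real.log ξ) * Real.log ξ := main_num hξ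
    have hkey := wrapper hξ hΦ hmain
    set Φ := Real.sqrt (ξ/2) * (1 - 0.371/Real.log ξ) with hΦdef
    have hlogΦ : 0 < Real.log Φ := Real.log_pos hΦ
    have hfΦ : (Φ^2 - Φ)/Real.log Φ < ξ/Real.log ξ := by
      rw [div_lt_div_iff₀ hlogΦ hL]
      exact hkey
    have hlt : (fun t : ℝ => (t^2 - t)/Real.log t) Φ < (fun t : ℝ => (t^2 - t)/Real.log t) ξ₂ := by
      simp only []
      rw [heq]
      exact hfΦ
    have := (f_mono.lt_iff_lt (Set.mem_Ioi.mpr hΦ) (Set.mem_Ioi.mpr hξ₂)).mp hlt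
    simpa using this
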